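/- Let R and Y be finite sets, X a set, and F a finite family of functions f: X×R→Y that is pairwise independent and F_{x,r,y} nonempty for all appearing triples. Fix x∈X. For each r∈R and y∈Y let p_{x,r,y} = Pr_{f←F}[f(x,r)=y], and let M_x be the matrix (operator from ℂ^{R×Y} to ℂ^F) whose (r,y)-th column is (1/√|R|)·|F_{x,r,y}⟩. Let |Φ₀⟩ ∈ ℂ^{R×Y} be the unit vector with (r,y)-entry √(p_{x,r,y}/|R|), and for each r let |Φ_{0,r}⟩ be the unit vector with (r',y)-entry δ_{r,r'}·√(p_{x,r,y}). Then M_x† M_x = (1/|R|)·I + |Φ₀⟩⟨Φ₀| − Σ_{r∈R}(1/|R|)·|Φ_{0,r}⟩⟨Φ_{0,r}|. -/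

import Mathlib

open Matrix

/-- `Pr_{f←F}[f (x,r) = y]` for the uniform distribution on the finite family `F`. -/
noncomputable def prob {X R Y : Type*} [DecidableEq Y]
    (F : Finset ((X × R) → Y)) (x : X) (r : R) (y : Y) : ℝ :=
  ((F.filter (fun f => f (x, r) = y)).card : ℝ) / F.card

/-- The matrix `M_x` whose `(r,y)`-th column is `(1/√|R|)·|F_{x,r,y}⟩`, where
`|F_{x,r,y}⟩` is the normalized uniform superposition over
`F_{x,r,y} = {f ∈ F : f (x,r) = y}`, in the Hilbert space with orthonormal basis
indexed by functions. -/
noncomputable def Mx {X R Y : Type*} [Fintype X] [Fintype R] [Fintype Y]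
    [DecidableEq X] [DecidableEq R] [DecidableEq Y]
    (F : Finset ((X × R) → Y)) (x : X) : Matrix ((X × R) → Y) (R × Y) ℂ :=
  Matrix.of fun f ry =>
    if f ∈ F.filter (fun g => g (x, ry.1) = ry.2) then
      ((((Real.sqrt (Fintype.card R))⁻¹ *
        (Real.sqrt ((F.filter (fun g => g (x, ry.1) = ry.2)).card))⁻¹ : ℝ)) : ℂ)
    else 0

lemma sqrt_diag_aux (a N Rn : ℝ) (ha : 0 < a) (hN : 0 < N) (hRn : 0 < Rn) :
    a * ((Real.sqrt Rn)⁻¹ * (Real.sqrt a)⁻¹) * ((Real.sqrt Rn)⁻¹ * (Real.sqrt a)⁻¹)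
    = Rn⁻¹ + Real.sqrt (a / N / Rn) * Real.sqrt (a / N / Rn)
      - Rn⁻¹ * (Real.sqrt (a / N) * Real.sqrt (a / N)) := by
  obtain ⟨u, hu, rfl⟩ : ∃ u, 0 < u ∧ a = u^2 := ⟨√a, by positivity, (Real.sq_sqrt ha.le).symm⟩
  obtain ⟨n, hn, rfl⟩ : ∃ u, 0 < u ∧ N = u^2 := ⟨√N, by positivity, (Real.sq_sqrt hN.le).symm⟩
  obtain ⟨p, hp, rfl⟩ : ∃ u, 0 < u ∧ Rn = u^2 := ⟨√Rn, by positivity, (Real.sq_sqrt hRn.le).symm⟩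
  rw [show u^2/n^2/p^2 = (u/n/p)^2 by ring, show u^2/n^2 = (u/n)^2 by ring,
    Real.sqrt_sq hu.le, Real.sqrt_sq hp.le,
    Real.sqrt_sq (by positivity : (0:ℝ) ≤ u/n/p), Real.sqrt_sq (by positivity : (0:ℝ) ≤ u/n)]
  field_simp
  ring

lemma sqrt_offd_aux (a b N Rn : ℝ) (ha : 0 < a) (hb : 0 < b) (hN : 0 < N) (hRn : 0 < Rn) :
    (0:ℝ) = Real.sqrt (a / N / Rn) * Real.sqrt (b / N / Rn)
      - Rn⁻¹ * (Real.sqrt (a / N) * Real.sqrt (b / N)) := by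
  obtain ⟨u, hu, rfl⟩ : ∃ u, 0 < u ∧ a = u^2 := ⟨√a, by positivity, (Real.sq_sqrt ha.le).symm⟩
  obtain ⟨v, hv, rfl⟩ : ∃ u, 0 < u ∧ b = u^2 := ⟨√b, by positivity, (Real.sq_sqrt hb.le).symm⟩
  obtain ⟨n, hn, rfl⟩ : ∃ u, 0 < u ∧ N = u^2 := ⟨√N, by positivity, (Real.sq_sqrt hN.le).symm⟩
  obtain ⟨p, hp, rfl⟩ : ∃ u, 0 < u ∧ Rn = u^2 := ⟨√Rn, by positivity, (Real.sq_sqrt hRn.le).symm⟩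
  rw [show u^2/n^2/p^2 = (u/n/p)^2 by ring, show v^2/n^2/p^2 = (v/n/p)^2 by ring,
    show u^2/n^2 = (u/n)^2 by ring, show v^2/n^2 = (v/n)^2 by ring,
    Real.sqrt_sq (by positivity : (0:ℝ) ≤ u/n/p), Real.sqrt_sq (by positivity : (0:ℝ) ≤ v/n/p),
    Real.sqrt_sq (by positivity : (0:ℝ) ≤ u/n), Real.sqrt_sq (by positivity : (0:ℝ) ≤ v/n)]
  field_simp
  ring

lemma sqrt_offr_aux (a b c N Rn : ℝ) (ha : 0 < a) (hb : 0 < b) (hN : 0 < N) (hRn : 0 < Rn)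
    (hc : c / N = a / N * (b / N)) :
    c * ((Real.sqrt Rn)⁻¹ * (Real.sqrt a)⁻¹) * ((Real.sqrt Rn)⁻¹ * (Real.sqrt b)⁻¹)
    = Real.sqrt (a / N / Rn) * Real.sqrt (b / N / Rn) := by
  have hc' : c = a * b / N := by
    have h2 : c * N * N = a * b * N := by field_simp at hc; linear_combination N * hc
    have h3 : c * N = a * b := mul_right_cancel₀ hN.ne' h2
    rw [eq_div_iff hN.ne']; exact h3
  subst hc'
  obtain ⟨u, hu, rfl⟩ : ∃ u, 0 < u ∧ a = u^2 := ⟨√a, by positivity, (Real.sq_sqrt ha.le).symm⟩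
  obtain ⟨v, hv, rfl⟩ : ∃ u, 0 < u ∧ b = u^2 := ⟨√b, by positivity, (Real.sq_sqrt hb.le).symm⟩
  obtain ⟨n, hn, rfl⟩ : ∃ u, 0 < u ∧ N = u^2 := ⟨√N, by positivity, (Real.sq_sqrt hN.le).symm⟩
  obtain ⟨p, hp, rfl⟩ : ∃ u, 0 < u ∧ Rn = u^2 := ⟨√Rn, by positivity, (Real.sq_sqrt hRn.le).symm⟩
  rw [show u^2/n^2/p^2 = (u/n/p)^2 by ring, show v^2/n^2/p^2 = (v/n/p)^2 by ring,
    Real.sqrt_sq hu.le, Real.sqrt_sq hv.le, Real.sqrt_sq hp.le,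
    Real.sqrt_sq (by positivity : (0:ℝ) ≤ u/n/p), Real.sqrt_sq (by positivity : (0:ℝ) ≤ v/n/p)]
  field_simp

lemma MxHMx_apply {X R Y : Type*} [Fintype X] [Fintype R] [Fintype Y]
    [DecidableEq X] [DecidableEq R] [DecidableEq Y]
    (F : Finset ((X × R) → Y)) (x : X) (r r' : R) (y y' : Y) :
    ((Mx F x)ᴴ * Mx F x) (r, y) (r', y') =
      Complex.ofReal ((((F.filter (fun f => f (x,r) = y ∧ f (x,r') = y')).card : ℝ)) *
        (((Real.sqrt (Fintype.card R))⁻¹ * (Real.sqrt ((F.filter (fun g => g (x, r) = y)).card))⁻¹) *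
        ((Real.sqrt (Fintype.card R))⁻¹ * (Real.sqrt ((F.filter (fun g => g (x, r') = y')).card))⁻¹))) := by
  rw [Matrix.mul_apply]
  simp only [Matrix.conjTranspose_apply, Mx, Matrix.of_apply, Complex.star_def,
    apply_ite (starRingEnd ℂ), map_zero, Complex.conj_ofReal, ite_mul, zero_mul, mul_ite,
    mul_zero]
  rw [Finset.sum_ite_mem, Finset.sum_ite_mem, Finset.univ_inter, Finset.inter_comm,
    ← Finset.filter_and, Finset.sum_const, nsmul_eq_mul]
  push_cast
  ring

/-- `M_x† M_x = (1/|R|)·I + |Φ₀⟩⟨Φ₀| − Σ_r (1/|R|)·|Φ_{0,r}⟩⟨Φ_{0,r}|`,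
where `Φ₀ (r,y) = √(p_{x,r,y}/|R|)` and `Φ_{0,r} (r',y) = δ_{r r'}·√(p_{x,r,y})`. -/
theorem stmt_5 {X R Y : Type*} [Fintype X] [Fintype R] [Fintype Y]
    [DecidableEq X] [DecidableEq R] [DecidableEq Y]
    (F : Finset ((X × R) → Y)) (hF : F.Nonempty)
    (hpi : ∀ (p p' : X × R), p ≠ p' → ∀ (y y' : Y),
      ((F.filter (fun f => f p = y ∧ f p' = y')).card : ℝ) / F.card =
        ((F.filter (fun f => f p = y)).card : ℝ) / F.card *
          (((F.filter (fun f => f p' = y')).card : ℝ) / F.card))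
    (x : X)
    (hne : ∀ (r : R) (y : Y), (F.filter (fun f => f (x, r) = y)).Nonempty) :
    (Mx F x)ᴴ * Mx F x =
      ((Fintype.card R : ℂ))⁻¹ • (1 : Matrix (R × Y) (R × Y) ℂ)
        + Matrix.vecMulVec (fun ry : R × Y => ((Real.sqrt (prob F x ry.1 ry.2 / Fintype.card R) : ℝ) : ℂ))
            (star (fun ry : R × Y => ((Real.sqrt (prob F x ry.1 ry.2 / Fintype.card R) : ℝ) : ℂ)))
        - ∑ r : R, ((Fintype.card R : ℂ))⁻¹ •
            Matrix.vecMulVec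
              (fun ry : R × Y => if ry.1 = r then ((Real.sqrt (prob F x r ry.2) : ℝ) : ℂ) else 0)
              (star (fun ry : R × Y => if ry.1 = r then ((Real.sqrt (prob F x r ry.2) : ℝ) : ℂ) else 0)) := by
  have hN : (0:ℝ) < F.card := by exact_mod_cast Finset.card_pos.mpr hF
  ext ⟨r, y⟩ ⟨r', y'⟩
  have hRn : (0:ℝ) < Fintype.card R := by
    exact_mod_cast Fintype.card_pos_iff.mpr ⟨r⟩
  have ha : (0:ℝ) < ((F.filter (fun g => g (x, r) = y)).card : ℝ) := by
    exact_mod_cast Finset.card_pos.mpr (hne r y)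
  have hb : (0:ℝ) < ((F.filter (fun g => g (x, r') = y')).card : ℝ) := by
    exact_mod_cast Finset.card_pos.mpr (hne r' y')
  rw [MxHMx_apply]
  simp only [Matrix.add_apply, Matrix.sub_apply, Matrix.sum_apply, Matrix.smul_apply,
    Matrix.vecMulVec_apply, Matrix.one_apply, Pi.star_apply, Complex.star_def,
    apply_ite (starRingEnd ℂ), map_zero, Complex.conj_ofReal, smul_eq_mul, prob,
    ite_mul, zero_mul, mul_ite, mul_zero, Prod.mk.injEq]
  by_cases hr : r = r'
  · subst hr
    by_cases hy : y = y'
    · subst hy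
      simp only [and_self, if_true, Finset.sum_ite_eq, Finset.sum_ite_eq', Finset.mem_univ,
        eq_self_iff_true, mul_one]
      have h' := congrArg Complex.ofReal (sqrt_diag_aux _ _ _ ha hN hRn)
      push_cast at h' ⊢
      linear_combination h'
    · have hemp : F.filter (fun f => f (x,r) = y ∧ f (x,r) = y') = ∅ :=
        Finset.filter_false_of_mem (fun f _ h => hy (h.1 ▸ h.2.symm ▸ rfl))
      simp only [hy, hemp, Finset.card_empty, Nat.cast_zero, zero_mul, Complex.ofReal_zero,
        Finset.sum_ite_eq, Finset.sum_ite_eq', Finset.mem_univ, if_true, if_false,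
        eq_self_iff_true, and_false, mul_one, zero_add]
      have h' := congrArg Complex.ofReal (sqrt_offd_aux _ _ _ _ ha hb hN hRn)
      push_cast at h' ⊢
      linear_combination h'
  · have hpp : ((x,r) : X × R) ≠ (x,r') := fun h => hr (congrArg Prod.snd h)
    simp only [hr, false_and, if_false, Ne.symm hr, Finset.sum_ite_eq, Finset.sum_ite_eq',
      Finset.mem_univ, if_true, Finset.sum_const_zero, sub_zero, zero_add]
    have h' := congrArg Complex.ofReal
      (sqrt_offr_aux _ _ _ _ _ ha hb hN hRn (hpi (x,r) (x,r') hpp y y'))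
    push_cast at h' ⊢
    linear_combination h'
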